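/- The ℓ^p norm on ℝ², for 1 ≤ p ≤ ∞, satisfies condition (H3): for every natural number h, ‖(h, h+1)‖_p − ‖(h,h)‖_p ≥ 1/2. -/

import Mathlib

theorem lp_norm_H3 (h : ℕ) :
    (∀ p : ℝ, 1 ≤ p →
      ((h : ℝ) ^ p + ((h : ℝ) + 1) ^ p) ^ (1 / p) -
        ((h : ℝ) ^ p + (h : ℝ) ^ p) ^ (1 / p) ≥ 1 / 2) ∧
    max (h : ℝ) ((h : ℝ) + 1) - max (h : ℝ) (h : ℝ) ≥ 1 / 2 := by
  constructor
  · intro p hp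
    have hp0 : (0 : ℝ) < p := lt_of_lt_of_le one_pos hp
    set a : ℝ := (h : ℝ) with ha_def
    have ha : 0 ≤ a := Nat.cast_nonneg h
    have ha1 : 0 ≤ a + 1 := by linarith
    -- convexity: 2 * (a + 1/2)^p ≤ a^p + (a+1)^p
    have key : 2 * (a + 1/2) ^ p ≤ a ^ p + (a + 1) ^ p := by
      have := NNReal.rpow_arith_mean_le_arith_mean2_rpow (1/2) (1/2)
        a.toNNReal (a + 1).toNNReal (by rw [← NNReal.coe_inj]; norm_num) hp
      have h2 := (NNReal.coe_le_coe).2 this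
      push_cast at h2
      rw [Real.coe_toNNReal _ ha, Real.coe_toNNReal _ ha1] at h2
      have e1 : (1:ℝ)/2 * a + 1/2 * (a+1) = a + 1/2 := by ring
      rw [e1] at h2
      linarith
    -- so (a^p + (a+1)^p)^(1/p) ≥ (2 * (a+1/2)^p)^(1/p) = 2^(1/p) * (a+1/2)
    have h1 : (2 * (a + 1/2) ^ p) ^ (1/p) ≤ (a ^ p + (a + 1) ^ p) ^ (1/p) :=
      Real.rpow_le_rpow (by positivity) key (by positivity)
    have hrec : p * (1/p) = 1 := by field_simp
    have e2 : (2 * (a + 1/2) ^ p) ^ (1/p) = 2 ^ (1/p) * (a + 1/2) := by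
      rw [Real.mul_rpow (by norm_num) (by positivity), ← Real.rpow_mul (by linarith : (0:ℝ) ≤ a + 1/2), hrec, Real.rpow_one]
    have e3 : (a ^ p + a ^ p) ^ (1/p) = 2 ^ (1/p) * a := by
      have : a ^ p + a ^ p = 2 * a ^ p := by ring
      rw [this, Real.mul_rpow (by norm_num) (by positivity), ← Real.rpow_mul ha, hrec, Real.rpow_one]
    have h2p : (1:ℝ) ≤ (2:ℝ) ^ (1/p) :=
      Real.one_le_rpow (by norm_num) (by positivity)
    have h4 : (2:ℝ) ^ (1/p) * (a + 1/2) - 2 ^ (1/p) * a = 2 ^ (1/p) / 2 := by ring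
    have h5 : (2:ℝ) ^ (1/p) / 2 ≥ 1/2 := by linarith
    calc (a ^ p + (a + 1) ^ p) ^ (1/p) - (a ^ p + a ^ p) ^ (1/p)
        ≥ 2 ^ (1/p) * (a + 1/2) - 2 ^ (1/p) * a := by rw [e3]; linarith
      _ = 2 ^ (1/p) / 2 := h4
      _ ≥ 1/2 := h5
  · simp [max_def]
    norm_num
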